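/- Beckner monotonicity: for any probability measure μ on ℝ^d and any measurable g : ℝ^d → (0,∞) with g² integrable, the map β ↦ (1/(β−1)) ( ∫ g² dμ − (∫ g^{2/β} dμ)^β ) is non-increasing on (1, ∞). -/

import Mathlib

open MeasureTheory

private lemma memLp_rpow_aux {α : Type*} [MeasurableSpace α] {μ : Measure α} {f : α → ℝ}
    (hf : ∀ x, 0 ≤ f x) (hint : Integrable f μ) {t : ℝ} (ht0 : 0 < t) :
    MemLp (fun x => f x ^ t) (ENNReal.ofReal (1/t)) μ := by
  have h := (memLp_norm_rpow_iff (p := 1) (q := ENNReal.ofReal t)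
      hint.aestronglyMeasurable (by simp [ENNReal.ofReal_eq_zero, not_le, ht0])
      ENNReal.ofReal_ne_top).2 (memLp_one_iff_integrable.2 hint)
  have h1 : (fun x : α => ‖f x‖ ^ (ENNReal.ofReal t).toReal) = fun x => f x ^ t := by
    funext x
    rw [Real.norm_of_nonneg (hf x), ENNReal.toReal_ofReal ht0.le]
  have h2 : (1 : ENNReal) / ENNReal.ofReal t = ENNReal.ofReal (1/t) := by
    rw [one_div, one_div, ENNReal.ofReal_inv_of_pos ht0]
  rwa [h1, h2] at h

/-- Beckner monotonicity: for a probability measure `μ` on `ℝ^d` and positive `g`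
with `g²` integrable, `β ↦ (1/(β−1)) (∫ g² dμ − (∫ g^{2/β} dμ)^β)` is
non-increasing on `(1, ∞)`. -/
theorem beckner_monotonicity
    {d : ℕ} (μ : Measure (Fin d → ℝ)) [IsProbabilityMeasure μ]
    (g : (Fin d → ℝ) → ℝ) (hg_meas : Measurable g) (hg_pos : ∀ x, 0 < g x)
    (hg2 : Integrable (fun x => g x ^ (2:ℝ)) μ)
    (hgβ : ∀ β : ℝ, 1 < β → Integrable (fun x => g x ^ (2/β)) μ) :
    AntitoneOn
      (fun β : ℝ =>
        (1 / (β - 1)) * ((∫ x, g x ^ (2:ℝ) ∂μ) - (∫ x, g x ^ (2/β) ∂μ) ^ β))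
      (Set.Ioi (1:ℝ)) := by
  intro β hβ β' hβ' hle
  simp only [Set.mem_Ioi] at hβ hβ'
  rcases eq_or_lt_of_le hle with rfl | hlt
  · exact le_refl _
  simp only
  set B : ℝ := ∫ x, g x ^ (2:ℝ) ∂μ with hB
  set A : ℝ := ∫ x, g x ^ (2/β') ∂μ with hA
  set C : ℝ := ∫ x, g x ^ (2/β) ∂μ with hC
  have hβ0 : (0:ℝ) < β := lt_trans one_pos hβ
  have hβ'0 : (0:ℝ) < β' := lt_trans one_pos hβ'
  have hβ1 : (0:ℝ) < β - 1 := by linarith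
  have hβ'1 : (0:ℝ) < β' - 1 := by linarith
  have hAnn : ∀ x, (0:ℝ) ≤ g x ^ (2/β') := fun x => Real.rpow_nonneg (hg_pos x).le _
  have hBnn : ∀ x, (0:ℝ) ≤ g x ^ (2:ℝ) := fun x => Real.rpow_nonneg (hg_pos x).le _
  have hA0 : 0 ≤ A := integral_nonneg hAnn
  have hB0 : 0 ≤ B := integral_nonneg hBnn
  have hC0 : 0 ≤ C := integral_nonneg fun x => Real.rpow_nonneg (hg_pos x).le _
  -- the interpolation parameter
  set t : ℝ := β' * (β - 1) / (β * (β' - 1)) with htdef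
  have ht0 : 0 < t := by positivity
  have ht1 : t < 1 := by
    rw [htdef, div_lt_one (by positivity)]
    nlinarith
  have h1t : 0 < 1 - t := by linarith
  -- conjugate exponents
  have hconj : Real.HolderConjugate (1/t) (1/(1-t)) := by
    rw [Real.holderConjugate_iff]; constructor
    · rw [lt_div_iff₀ ht0]; linarith
    · rw [one_div, one_div, inv_inv, inv_inv]; ring
  -- Hölder's inequality (log-convexity of moments)
  have key : C ≤ A ^ t * B ^ (1 - t) := by
    have hmem1 : MemLp (fun x => (g x ^ (2/β')) ^ t) (ENNReal.ofReal (1/t)) μ :=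
      memLp_rpow_aux hAnn (hgβ β' hβ') ht0
    have hmem2 : MemLp (fun x => (g x ^ (2:ℝ)) ^ (1-t)) (ENNReal.ofReal (1/(1-t))) μ :=
      memLp_rpow_aux hBnn hg2 h1t
    have holder := integral_mul_le_Lp_mul_Lq_of_nonneg hconj
      (f := fun x => (g x ^ (2/β')) ^ t) (g := fun x => (g x ^ (2:ℝ)) ^ (1-t))
      (Filter.Eventually.of_forall fun x => Real.rpow_nonneg (hAnn x) _)
      (Filter.Eventually.of_forall fun x => Real.rpow_nonneg (hBnn x) _)
      hmem1 hmem2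
    have hexp : 2/β' * t + 2 * (1-t) = 2/β := by
      rw [htdef]; field_simp; ring
    have hLHS : ∫ x, ((g x ^ (2/β')) ^ t) * ((g x ^ (2:ℝ)) ^ (1-t)) ∂μ = C := by
      rw [hC]
      refine integral_congr_ae (Filter.Eventually.of_forall fun x => ?_)
      show (g x ^ (2/β')) ^ t * (g x ^ (2:ℝ)) ^ (1-t) = g x ^ (2/β)
      rw [← Real.rpow_mul (hg_pos x).le, ← Real.rpow_mul (hg_pos x).le,
        ← Real.rpow_add (hg_pos x), hexp]
    have hfp : ∀ x, ((g x ^ (2/β')) ^ t) ^ (1/t) = g x ^ (2/β') := fun x => by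
      rw [← Real.rpow_mul (hAnn x), mul_one_div_cancel ht0.ne', Real.rpow_one]
    have hgp : ∀ x, ((g x ^ (2:ℝ)) ^ (1-t)) ^ (1/(1-t)) = g x ^ (2:ℝ) := fun x => by
      rw [← Real.rpow_mul (hBnn x), mul_one_div_cancel h1t.ne', Real.rpow_one]
    simp only [hfp, hgp, one_div_one_div] at holder
    rwa [hLHS] at holder
  -- raise to the power β and apply weighted AM-GM
  set l : ℝ := (β' - β)/(β' - 1) with hldef
  have hl0 : 0 ≤ l := by
    rw [hldef]; apply div_nonneg <;> linarith
  have hl1 : 0 ≤ 1 - l := by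
    rw [hldef, sub_nonneg, div_le_one hβ'1]; linarith
  have hlsum : (1 - l) + l = 1 := by ring
  have ht_b : t * β = β' * (1 - l) := by
    rw [htdef, hldef]; field_simp; ring
  have h1t_b : (1 - t) * β = l := by
    rw [htdef, hldef]; field_simp; ring
  have step : C ^ β ≤ (1 - l) * A ^ β' + l * B := by
    calc C ^ β ≤ (A ^ t * B ^ (1-t)) ^ β := Real.rpow_le_rpow hC0 key hβ0.le
    _ = (A ^ β') ^ (1 - l) * B ^ l := by
        rw [Real.mul_rpow (Real.rpow_nonneg hA0 _) (Real.rpow_nonneg hB0 _),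
          ← Real.rpow_mul hA0, ← Real.rpow_mul hB0, ht_b, h1t_b,
          Real.rpow_mul hA0]
    _ ≤ (1 - l) * A ^ β' + l * B :=
        Real.geom_mean_le_arith_mean2_weighted hl1 hl0
          (Real.rpow_nonneg hA0 _) hB0 hlsum
  -- conclude by arithmetic
  rw [div_mul_eq_mul_div, div_mul_eq_mul_div, div_le_div_iff₀ hβ'1 hβ1]
  have hstep' : (β' - 1) * (C ^ β) ≤ (β - 1) * A ^ β' + (β' - β) * B := by
    have h := mul_le_mul_of_nonneg_left step hβ'1.le
    rw [hldef] at h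
    calc (β' - 1) * C ^ β ≤ (β' - 1) * ((1 - (β' - β)/(β' - 1)) * A ^ β'
        + (β' - β)/(β' - 1) * B) := h
    _ = (β - 1) * A ^ β' + (β' - β) * B := by field_simp; ring
  nlinarith [hstep']
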